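/- Let g be an entire function that is holomorphic on ℂ and satisfies |g(Re^{iα})| ≤ q(R) e^{cR} e^{-γR² sin(2α)} · R for all R > 0, α ∈ [0, π/4], where γ > 0, c > 0 and q has polynomial growth. If additionally g is entire, then ∫_0^∞ g(u) du = e^{iπ/4} ∫_0^∞ g(u e^{iπ/4}) du, provided both improper integrals converge absolutely. (Fresnel rotation of the contour by π/4.) -/

import Mathlib

open MeasureTheory Set Filter intervalIntegral Topology

noncomputable def E4 : ℂ := Complex.exp (Complex.I * (Real.pi : ℂ) / 4)

lemma E4_sq : E4 ^ 2 = Complex.I := by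
  rw [E4, ← Complex.exp_nat_mul]
  rw [show (2:ℕ) * (Complex.I * (Real.pi : ℂ) / 4) = (Real.pi/2 : ℝ) * Complex.I by push_cast; ring,
    Complex.exp_mul_I]
  simp

lemma E4_eq (y : ℝ) (hy : y = Real.pi / 4) : Complex.exp (y * Complex.I) = E4 := by
  rw [E4, hy]; push_cast; ring_nf

lemma E4_norm : ‖E4‖ = 1 := by
  rw [E4, Complex.norm_exp]
  simp [Complex.div_re]

lemma norm_exp_yI (y : ℝ) : ‖Complex.exp (y * Complex.I)‖ = 1 := by
  rw [Complex.norm_exp]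
  simp


noncomputable def Gf (η : ℝ) (g : ℂ → ℂ) (z : ℂ) : ℂ := g z * Complex.exp (-(η:ℂ) * z^2)

noncomputable def arcA (η : ℝ) (g : ℂ → ℂ) (r : ℝ) : ℂ :=
  Complex.I • ∫ y in (0:ℝ)..(Real.pi/4),
    Gf η g ((r:ℂ) * Complex.exp ((y:ℂ) * Complex.I)) * ((r:ℂ) * Complex.exp ((y:ℂ) * Complex.I))

noncomputable def ΦB (C c δ : ℝ) (k : ℕ) (r : ℝ) : ℝ :=
  (Real.pi/4) * (C * (1+r)^k * Real.exp (c*r) * Real.exp (-δ*r^2) * r * r)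


lemma Gf_norm_real (η : ℝ) (hη : 0 ≤ η) (g : ℂ → ℂ) (u : ℝ) :
    ‖Gf η g (u:ℂ)‖ ≤ ‖g (u:ℂ)‖ := by
  rw [Gf, norm_mul]
  apply mul_le_of_le_one_right (norm_nonneg _)
  rw [show -(η:ℂ) * (u:ℂ)^2 = ((-(η*u^2):ℝ):ℂ) by push_cast; ring,
    Complex.norm_exp, Complex.ofReal_re, Real.exp_le_one_iff]
  nlinarith [sq_nonneg u]

lemma Gf_norm_ray (η : ℝ) (g : ℂ → ℂ) (u : ℝ) :
    ‖Gf η g ((u:ℂ) * E4)‖ = ‖g ((u:ℂ) * E4)‖ := by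
  rw [Gf, norm_mul]
  have : -(η:ℂ) * ((u:ℂ) * E4)^2 = ((-(η*u^2):ℝ):ℂ) * Complex.I := by
    rw [mul_pow, E4_sq]; push_cast; ring
  rw [this]
  rw [Complex.norm_exp_ofReal_mul_I, mul_one]

lemma Gf_tendsto (g : ℂ → ℂ) (z : ℂ) :
    Tendsto (fun n : ℕ => Gf (1/((n:ℝ)+1)) g z) atTop (𝓝 (g z)) := by
  have h0 : Tendsto (fun n : ℕ => (1/((n:ℝ)+1) : ℝ)) atTop (𝓝 0) :=
    tendsto_one_div_add_atTop_nhds_zero_nat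
  have h1 : Tendsto (fun n : ℕ => -((1/((n:ℝ)+1) : ℝ) : ℂ) * z^2) atTop (𝓝 0) := by
    have := ((Complex.continuous_ofReal.tendsto 0).comp h0).neg.mul_const (z^2)
    simpa using this
  have h2 := (Complex.continuous_exp.tendsto 0).comp h1
  rw [Complex.exp_zero] at h2
  have h3 : Tendsto (fun n : ℕ => g z * Complex.exp (-((1/((n:ℝ)+1) : ℝ) : ℂ) * z^2))
      atTop (𝓝 (g z * 1)) := tendsto_const_nhds.mul h2
  simpa [Gf] using h3

lemma PhiB_tendsto_top (C c δ : ℝ) (k : ℕ) (hC0 : 0 ≤ C) (hc : 0 < c) (hδ : 0 < δ) :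
    Tendsto (ΦB C c δ k) atTop (𝓝 0) := by
  have hU : Tendsto (fun r : ℝ => (Real.pi/4*C) * Real.exp (((k:ℝ)+c+2)*r - δ*r^2))
      atTop (𝓝 ((Real.pi/4*C) * 0)) := by
    apply Tendsto.const_mul
    apply Real.tendsto_exp_atBot.comp
    have h1 : Tendsto (fun r : ℝ => ((k:ℝ)+c+2) - δ*r) atTop atBot := by
      apply tendsto_atBot_add_const_left
      exact tendsto_neg_atTop_atBot.comp (tendsto_id.const_mul_atTop hδ)
    have h2 : Tendsto (fun r : ℝ => r * (((k:ℝ)+c+2) - δ*r)) atTop atBot :=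
      Tendsto.atTop_mul_atBot₀ tendsto_id h1
    convert h2 using 2 with r
    ring
  rw [mul_zero] at hU
  apply tendsto_of_tendsto_of_tendsto_of_le_of_le' tendsto_const_nhds hU
  · filter_upwards [eventually_ge_atTop (0:ℝ)] with r hr
    rw [ΦB]; positivity
  · filter_upwards [eventually_ge_atTop (0:ℝ)] with r hr
    rw [ΦB]
    have e1 : (1+r)^k ≤ Real.exp ((k:ℝ)*r) := by
      calc (1+r)^k ≤ (Real.exp r)^k := by
            apply pow_le_pow_left₀ (by linarith) (by linarith [Real.add_one_le_exp r])
        _ = Real.exp ((k:ℝ)*r) := by rw [← Real.exp_nat_mul]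
    have e2 : r ≤ Real.exp r := (Real.add_one_le_exp r).trans' (by linarith)
    calc (Real.pi/4) * (C * (1+r)^k * Real.exp (c*r) * Real.exp (-δ*r^2) * r * r)
        ≤ (Real.pi/4) * (C * Real.exp ((k:ℝ)*r) * Real.exp (c*r) * Real.exp (-δ*r^2)
            * Real.exp r * Real.exp r) := by
          have hπ : (0:ℝ) ≤ Real.pi/4 := by positivity
          apply mul_le_mul_of_nonneg_left _ hπ
          gcongr <;> positivity
      _ = (Real.pi/4*C) * Real.exp (((k:ℝ)+c+2)*r - δ*r^2) := by
          rw [show ((k:ℝ)+c+2)*r - δ*r^2 = (k:ℝ)*r + (c*r) + (-δ*r^2) + r + r by ring,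
            Real.exp_add, Real.exp_add, Real.exp_add, Real.exp_add]
          ring


lemma PhiB_tendsto_zero (C c δ : ℝ) (k : ℕ) :
    Tendsto (fun n : ℕ => ΦB C c δ k (Real.exp (-(n:ℝ)))) atTop (𝓝 0) := by
  have hc : Continuous (ΦB C c δ k) := by unfold ΦB; fun_prop
  have he : Tendsto (fun n : ℕ => Real.exp (-(n:ℝ))) atTop (𝓝 0) := by
    apply Real.tendsto_exp_atBot.comp
    exact tendsto_neg_atTop_atBot.comp (tendsto_natCast_atTop_atTop)
  have h := (hc.tendsto 0).comp he
  have h0 : ΦB C c δ k 0 = 0 := by simp [ΦB]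
  rw [h0] at h
  exact h

lemma fresnel_aux (g : ℂ → ℂ) (hg : Differentiable ℂ g)
    (γ c : ℝ) (hγ : 0 < γ) (hc : 0 < c) (C : ℝ) (k : ℕ) (q : ℝ → ℝ)
    (hq : ∀ R : ℝ, 0 ≤ R → |q R| ≤ C * (1 + R) ^ k)
    (hbound : ∀ R : ℝ, 0 < R → ∀ α ∈ Set.Icc (0 : ℝ) (Real.pi / 4),
        ‖g ((R : ℂ) * Complex.exp (Complex.I * (α : ℂ)))‖
          ≤ q R * Real.exp (c * R) * Real.exp (-γ * R ^ 2 * Real.sin (2 * α)) * R)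
    (h1 : MeasureTheory.IntegrableOn (fun u : ℝ => g (u : ℂ)) (Set.Ioi 0))
    (h2 : MeasureTheory.IntegrableOn (fun u : ℝ => g ((u : ℂ) * E4)) (Set.Ioi 0))
    (η : ℝ) (hη : 0 < η) :
    ∫ u in Set.Ioi (0 : ℝ), Gf η g (u:ℂ)
      = E4 * ∫ u in Set.Ioi (0 : ℝ), Gf η g ((u : ℂ) * E4) := by
  have hGdiff : Differentiable ℂ (Gf η g) := by
    unfold Gf
    fun_prop
  have hC0 : 0 ≤ C := by
    have h := hq 0 le_rfl
    have h0 : (0:ℝ) ≤ |q 0| := abs_nonneg _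
    simp only [add_zero, one_pow, mul_one] at h
    linarith
  have hδ : 0 < min γ η := lt_min hγ hη
  set δ : ℝ := min γ η with hδdef
  -- pointwise sector bound for Gf
  have hGbd : ∀ R : ℝ, 0 < R → ∀ y ∈ Set.Icc (0:ℝ) (Real.pi/4),
      ‖Gf η g ((R:ℂ) * Complex.exp ((y:ℂ) * Complex.I))‖
        ≤ C * (1+R)^k * Real.exp (c*R) * Real.exp (-δ*R^2) * R := by
    intro R hR y hy
    have hsq : (Complex.exp ((y:ℂ)*Complex.I))^2 = Complex.exp (((2*y:ℝ):ℂ)*Complex.I) := by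
      rw [sq, ← Complex.exp_add]; push_cast; ring_nf
    have hre : (-(η:ℂ) * (((R:ℂ))*Complex.exp ((y:ℂ)*Complex.I))^2).re
        = -(η*R^2) * Real.cos (2*y) := by
      rw [mul_pow, hsq, show -(η:ℂ) * (((R:ℂ))^2 * Complex.exp (((2*y:ℝ):ℂ)*Complex.I))
          = ((-(η*R^2):ℝ):ℂ) * Complex.exp (((2*y:ℝ):ℂ)*Complex.I) by push_cast; ring]
      rw [Complex.re_ofReal_mul, Complex.exp_ofReal_mul_I_re]
    have hnorm : ‖Gf η g ((R:ℂ) * Complex.exp ((y:ℂ) * Complex.I))‖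
        = ‖g ((R:ℂ) * Complex.exp ((y:ℂ) * Complex.I))‖ * Real.exp (-(η*R^2) * Real.cos (2*y)) := by
      rw [Gf, norm_mul, Complex.norm_exp, hre]
    have harg : (R:ℂ) * Complex.exp ((y:ℂ)*Complex.I) = (R:ℂ) * Complex.exp (Complex.I * (y:ℂ)) := by
      rw [mul_comm (y:ℂ)]
    have hgb := hbound R hR y hy
    -- trig facts
    have h2y0 : 0 ≤ 2*y := by linarith [hy.1]
    have h2yπ : 2*y ≤ Real.pi/2 := by linarith [hy.2]
    have hs0 : 0 ≤ Real.sin (2*y) := Real.sin_nonneg_of_nonneg_of_le_pi h2y0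
      (by linarith [Real.pi_pos])
    have hco0 : 0 ≤ Real.cos (2*y) := Real.cos_nonneg_of_mem_Icc ⟨by linarith [Real.pi_pos], h2yπ⟩
    have hs1 : Real.sin (2*y) ≤ 1 := Real.sin_le_one _
    have hco1 : Real.cos (2*y) ≤ 1 := Real.cos_le_one _
    have hpyth := Real.sin_sq_add_cos_sq (2*y)
    have hsum : 1 ≤ Real.sin (2*y) + Real.cos (2*y) := by nlinarith
    have hδγ : δ ≤ γ := hδdef ▸ min_le_left _ _
    have hδη : δ ≤ η := hδdef ▸ min_le_right _ _
    have hδ0 : 0 < δ := hδdef ▸ lt_min hγ hη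
    calc ‖Gf η g ((R:ℂ) * Complex.exp ((y:ℂ) * Complex.I))‖
        = ‖g ((R:ℂ) * Complex.exp ((y:ℂ) * Complex.I))‖ * Real.exp (-(η*R^2) * Real.cos (2*y)) :=
          hnorm
      _ ≤ (q R * Real.exp (c * R) * Real.exp (-γ * R ^ 2 * Real.sin (2 * y)) * R)
            * Real.exp (-(η*R^2) * Real.cos (2*y)) := by
          gcongr
          rw [harg]; exact hgb
      _ = (q R * R) * (Real.exp (c*R)
            * Real.exp (-γ * R^2 * Real.sin (2*y) + -(η*R^2) * Real.cos (2*y))) := by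
          rw [Real.exp_add]; ring
      _ ≤ (C*(1+R)^k * R) * (Real.exp (c*R) * Real.exp (-δ*R^2)) := by
          have e1 : q R * R ≤ C*(1+R)^k * R :=
            mul_le_mul_of_nonneg_right ((le_abs_self _).trans (hq R hR.le)) hR.le
          have e2 : Real.exp (-γ * R^2 * Real.sin (2*y) + -(η*R^2) * Real.cos (2*y))
              ≤ Real.exp (-δ*R^2) := by
            apply Real.exp_le_exp.2
            nlinarith [mul_nonneg (mul_nonneg (sub_nonneg.2 hδγ) (sq_nonneg R)) hs0,
              mul_nonneg (mul_nonneg (sub_nonneg.2 hδη) (sq_nonneg R)) hco0,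
              mul_nonneg (mul_nonneg hδ0.le (sq_nonneg R))
                (by linarith : (0:ℝ) ≤ Real.sin (2*y) + Real.cos (2*y) - 1)]
          exact mul_le_mul e1 (mul_le_mul_of_nonneg_left e2 (Real.exp_pos _).le)
            (by positivity) (by positivity)
      _ = C * (1+R)^k * Real.exp (c*R) * Real.exp (-δ*R^2) * R := by ring
  -- arc bound
  have hAbd : ∀ r : ℝ, 0 < r → ‖arcA η g r‖ ≤ ΦB C c δ k r := by
    intro r hr
    rw [arcA, norm_smul, Complex.norm_I, one_mul]
    have hb : ∀ y ∈ Set.uIoc (0:ℝ) (Real.pi/4),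
        ‖Gf η g ((r:ℂ) * Complex.exp ((y:ℂ) * Complex.I)) * ((r:ℂ) * Complex.exp ((y:ℂ) * Complex.I))‖
          ≤ C * (1+r)^k * Real.exp (c*r) * Real.exp (-δ*r^2) * r * r := by
      intro y hy
      rw [Set.uIoc_of_le (by positivity : (0:ℝ) ≤ Real.pi/4)] at hy
      have hy' : y ∈ Set.Icc (0:ℝ) (Real.pi/4) := ⟨hy.1.le, hy.2⟩
      rw [norm_mul]
      have hn : ‖(r:ℂ) * Complex.exp ((y:ℂ) * Complex.I)‖ = r := by
        rw [norm_mul, Complex.norm_exp]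
        simp [abs_of_pos hr]
      rw [hn]
      exact mul_le_mul_of_nonneg_right (hGbd r hr y hy') hr.le
    have := intervalIntegral.norm_integral_le_of_norm_le_const hb
    rw [sub_zero, abs_of_pos (by positivity : (0:ℝ) < Real.pi/4)] at this
    calc _ ≤ C * (1+r)^k * Real.exp (c*r) * Real.exp (-δ*r^2) * r * r * (Real.pi/4) := this
      _ = ΦB C c δ k r := by rw [ΦB]; ring
  -- Cauchy on the rectangle pushed through exp
  have hrect : ∀ a b : ℝ,
      (∫ u in Real.exp a..Real.exp b, Gf η g (u:ℂ))
        - E4 * (∫ u in Real.exp a..Real.exp b, Gf η g ((u:ℂ) * E4))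
        + arcA η g (Real.exp b) - arcA η g (Real.exp a) = 0 := by
    intro a b
    have hfd : Differentiable ℂ (fun w => Gf η g (Complex.exp w) * Complex.exp w) :=
      (hGdiff.comp Complex.differentiable_exp).mul Complex.differentiable_exp
    have H := Complex.integral_boundary_rect_eq_zero_of_differentiableOn
      (fun w => Gf η g (Complex.exp w) * Complex.exp w) (a:ℂ)
      ((b:ℂ) + ((Real.pi/4 : ℝ):ℂ) * Complex.I) hfd.differentiableOn
    have hre1 : ((a:ℂ)).re = a := Complex.ofReal_re a
    have him1 : ((a:ℂ)).im = 0 := Complex.ofReal_im a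
    have hre2 : ((b:ℂ) + ((Real.pi/4 : ℝ):ℂ) * Complex.I).re = b := by simp
    have him2 : ((b:ℂ) + ((Real.pi/4 : ℝ):ℂ) * Complex.I).im = Real.pi/4 := by simp
    rw [hre1, him1, hre2, him2] at H
    have hsub : ∀ (W : ℂ), (∫ x in a..b, Gf η g (Complex.exp (↑x) * W) * (Complex.exp (↑x) * W))
        = ∫ u in Real.exp a..Real.exp b, Gf η g ((u:ℂ) * W) * W := by
      intro W
      have hcs := intervalIntegral.integral_comp_smul_deriv (a := a) (b := b)
        (f := Real.exp) (f' := Real.exp) (g := fun u : ℝ => Gf η g ((u:ℂ) * W) * W)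
        (fun x _ => Real.hasDerivAt_exp x) Real.continuous_exp.continuousOn
        (by have := hGdiff.continuous; fun_prop)
      rw [← hcs]
      apply intervalIntegral.integral_congr
      intro x _
      simp only [Function.comp_apply, Complex.real_smul, Complex.ofReal_exp]
      ring
    -- bottom edge
    have eq1 : (∫ x in a..b, Gf η g (Complex.exp (↑x + (0:ℝ) * Complex.I))
          * Complex.exp (↑x + (0:ℝ) * Complex.I))
        = ∫ u in Real.exp a..Real.exp b, Gf η g (u:ℂ) := by
      have := hsub 1
      simp only [mul_one] at this
      rw [← this]
      apply intervalIntegral.integral_congr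
      intro x _
      norm_num
    -- top edge
    have eq2 : (∫ x in a..b, Gf η g (Complex.exp (↑x + ((Real.pi/4:ℝ):ℂ) * Complex.I))
          * Complex.exp (↑x + ((Real.pi/4:ℝ):ℂ) * Complex.I))
        = E4 * ∫ u in Real.exp a..Real.exp b, Gf η g ((u:ℂ) * E4) := by
      have h0 := hsub E4
      have hE : Complex.exp (((Real.pi/4:ℝ):ℂ) * Complex.I) = E4 := E4_eq _ rfl
      have h1 : (∫ x in a..b, Gf η g (Complex.exp (↑x + ((Real.pi/4:ℝ):ℂ) * Complex.I))
            * Complex.exp (↑x + ((Real.pi/4:ℝ):ℂ) * Complex.I))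
          = ∫ x in a..b, Gf η g (Complex.exp (↑x) * E4) * (Complex.exp (↑x) * E4) := by
        apply intervalIntegral.integral_congr
        intro x _
        simp only [Complex.exp_add, hE]
      rw [h1, h0, intervalIntegral.integral_mul_const, mul_comm]
    -- right edge
    have eq3 : ∀ t : ℝ, (Complex.I • ∫ y in (0:ℝ)..(Real.pi/4),
          Gf η g (Complex.exp (↑t + ↑y * Complex.I)) * Complex.exp (↑t + ↑y * Complex.I))
        = arcA η g (Real.exp t) := by
      intro t
      rw [arcA]
      congr 1
      apply intervalIntegral.integral_congr
      intro y _
      simp only [Complex.exp_add, Complex.ofReal_exp]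
    rw [eq1, eq2, eq3, eq3] at H
    exact H
  -- integrability
  have hGcont : Continuous (Gf η g) := hGdiff.continuous
  have hG1 : MeasureTheory.IntegrableOn (fun u : ℝ => Gf η g (u:ℂ)) (Set.Ioi 0) :=
    MeasureTheory.Integrable.mono h1
      (hGcont.comp Complex.continuous_ofReal).aestronglyMeasurable
      (Filter.Eventually.of_forall fun u => Gf_norm_real η hη.le g u)
  have hG2 : MeasureTheory.IntegrableOn (fun u : ℝ => Gf η g ((u:ℂ) * E4)) (Set.Ioi 0) :=
    MeasureTheory.Integrable.mono h2
      (hGcont.comp (Complex.continuous_ofReal.mul continuous_const)).aestronglyMeasurable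
      (Filter.Eventually.of_forall fun u => le_of_eq (Gf_norm_ray η g u))
  have hΦtop : Tendsto (ΦB C c δ k) atTop (𝓝 0) := PhiB_tendsto_top C c δ k hC0 hc hδ
  have hΦ0 : Tendsto (fun n : ℕ => ΦB C c δ k (Real.exp (-(n:ℝ)))) atTop (𝓝 0) :=
    PhiB_tendsto_zero C c δ k
  have hkey : ∀ a : ℝ,
      (∫ u in Set.Ioi (Real.exp a), Gf η g (u:ℂ))
        = E4 * (∫ u in Set.Ioi (Real.exp a), Gf η g ((u:ℂ) * E4)) + arcA η g (Real.exp a) := by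
    intro a
    have hea : (0:ℝ) < Real.exp a := Real.exp_pos a
    have hint1 : IntegrableOn (fun u : ℝ => Gf η g (u:ℂ)) (Set.Ioi (Real.exp a)) :=
      hG1.mono_set (Set.Ioi_subset_Ioi hea.le)
    have hint2 : IntegrableOn (fun u : ℝ => Gf η g ((u:ℂ) * E4)) (Set.Ioi (Real.exp a)) :=
      hG2.mono_set (Set.Ioi_subset_Ioi hea.le)
    have T1 : Tendsto (fun b : ℝ => ∫ u in (Real.exp a)..(Real.exp b), Gf η g (u:ℂ)) atTop
        (𝓝 (∫ u in Set.Ioi (Real.exp a), Gf η g (u:ℂ))) :=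
      MeasureTheory.intervalIntegral_tendsto_integral_Ioi _ hint1 Real.tendsto_exp_atTop
    have T2 : Tendsto (fun b : ℝ => ∫ u in (Real.exp a)..(Real.exp b), Gf η g ((u:ℂ)*E4)) atTop
        (𝓝 (∫ u in Set.Ioi (Real.exp a), Gf η g ((u:ℂ)*E4))) :=
      MeasureTheory.intervalIntegral_tendsto_integral_Ioi _ hint2 Real.tendsto_exp_atTop
    have T3 : Tendsto (fun b : ℝ => arcA η g (Real.exp b)) atTop (𝓝 0) := by
      apply squeeze_zero_norm (fun b => hAbd _ (Real.exp_pos b))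
      exact hΦtop.comp Real.tendsto_exp_atTop
    have Tcomb : Tendsto (fun b : ℝ =>
        (∫ u in (Real.exp a)..(Real.exp b), Gf η g (u:ℂ))
          - E4 * (∫ u in (Real.exp a)..(Real.exp b), Gf η g ((u:ℂ)*E4))
          + arcA η g (Real.exp b) - arcA η g (Real.exp a)) atTop
        (𝓝 ((∫ u in Set.Ioi (Real.exp a), Gf η g (u:ℂ))
          - E4 * (∫ u in Set.Ioi (Real.exp a), Gf η g ((u:ℂ)*E4)) + 0 - arcA η g (Real.exp a))) :=
      (((T1.sub (T2.const_mul E4)).add T3).sub tendsto_const_nhds)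
    have hzero : (fun b : ℝ =>
        (∫ u in (Real.exp a)..(Real.exp b), Gf η g (u:ℂ))
          - E4 * (∫ u in (Real.exp a)..(Real.exp b), Gf η g ((u:ℂ)*E4))
          + arcA η g (Real.exp b) - arcA η g (Real.exp a)) = fun _ => (0:ℂ) :=
      funext fun b => hrect a b
    rw [hzero] at Tcomb
    have := tendsto_nhds_unique Tcomb tendsto_const_nhds
    linear_combination this
  -- now a → -∞ along a = -n
  have hsm : ∀ n : ℕ, MeasurableSet (Set.Ioi (Real.exp (-(n:ℝ)))) := fun n => measurableSet_Ioi
  have hmono : Monotone (fun n : ℕ => Set.Ioi (Real.exp (-(n:ℝ)))) := by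
    intro m n hmn
    apply Set.Ioi_subset_Ioi
    apply Real.exp_le_exp.2
    simp only [neg_le_neg_iff, Nat.cast_le]
    exact_mod_cast hmn
  have hU : (⋃ n : ℕ, Set.Ioi (Real.exp (-(n:ℝ)))) = Set.Ioi (0:ℝ) := by
    ext x
    simp only [Set.mem_iUnion, Set.mem_Ioi]
    constructor
    · rintro ⟨n, hn⟩
      exact lt_trans (Real.exp_pos _) hn
    · intro hx
      obtain ⟨n, hn⟩ := exists_nat_gt (-Real.log x)
      exact ⟨n, by
        rw [show x = Real.exp (Real.log x) from (Real.exp_log hx).symm]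
        exact Real.exp_lt_exp.2 (by linarith)⟩
  have L1 : Tendsto (fun n : ℕ => ∫ u in Set.Ioi (Real.exp (-(n:ℝ))), Gf η g (u:ℂ)) atTop
      (𝓝 (∫ u in Set.Ioi (0:ℝ), Gf η g (u:ℂ))) := by
    have := tendsto_setIntegral_of_monotone hsm hmono (hU ▸ hG1)
    rwa [hU] at this
  have L2 : Tendsto (fun n : ℕ => ∫ u in Set.Ioi (Real.exp (-(n:ℝ))), Gf η g ((u:ℂ)*E4)) atTop
      (𝓝 (∫ u in Set.Ioi (0:ℝ), Gf η g ((u:ℂ)*E4))) := by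
    have := tendsto_setIntegral_of_monotone hsm hmono (hU ▸ hG2)
    rwa [hU] at this
  have L3 : Tendsto (fun n : ℕ => arcA η g (Real.exp (-(n:ℝ)))) atTop (𝓝 0) :=
    squeeze_zero_norm (fun n => hAbd _ (Real.exp_pos _)) hΦ0
  have L2' : Tendsto (fun n : ℕ =>
      E4 * (∫ u in Set.Ioi (Real.exp (-(n:ℝ))), Gf η g ((u:ℂ)*E4)) + arcA η g (Real.exp (-(n:ℝ))))
      atTop (𝓝 (E4 * (∫ u in Set.Ioi (0:ℝ), Gf η g ((u:ℂ)*E4)) + 0)) :=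
    (L2.const_mul E4).add L3
  have heq : (fun n : ℕ => ∫ u in Set.Ioi (Real.exp (-(n:ℝ))), Gf η g (u:ℂ))
      = fun n : ℕ =>
      E4 * (∫ u in Set.Ioi (Real.exp (-(n:ℝ))), Gf η g ((u:ℂ)*E4)) + arcA η g (Real.exp (-(n:ℝ))) :=
    funext fun n => hkey (-(n:ℝ))
  rw [heq] at L1
  have := tendsto_nhds_unique L1 L2'
  rw [add_zero] at this
  exact this

theorem fresnel_contour_rotation (g : ℂ → ℂ) (hg : Differentiable ℂ g)
    (γ c : ℝ) (hγ : 0 < γ) (hc : 0 < c) (q : ℝ → ℝ)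
    (hq : ∃ C : ℝ, ∃ k : ℕ, ∀ R : ℝ, 0 ≤ R → |q R| ≤ C * (1 + R) ^ k)
    (hbound : ∀ R : ℝ, 0 < R → ∀ α ∈ Set.Icc (0 : ℝ) (Real.pi / 4),
        ‖g ((R : ℂ) * Complex.exp (Complex.I * (α : ℂ)))‖
          ≤ q R * Real.exp (c * R) * Real.exp (-γ * R ^ 2 * Real.sin (2 * α)) * R)
    (h1 : MeasureTheory.IntegrableOn (fun u : ℝ => g (u : ℂ)) (Set.Ioi 0))
    (h2 : MeasureTheory.IntegrableOn
        (fun u : ℝ => g ((u : ℂ) * Complex.exp (Complex.I * (Real.pi : ℂ) / 4))) (Set.Ioi 0)) :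
    ∫ u in Set.Ioi (0 : ℝ), g (u : ℂ)
      = Complex.exp (Complex.I * (Real.pi : ℂ) / 4) *
          ∫ u in Set.Ioi (0 : ℝ), g ((u : ℂ) * Complex.exp (Complex.I * (Real.pi : ℂ) / 4)) := by
  obtain ⟨C, k, hqk⟩ := hq
  have h2' : MeasureTheory.IntegrableOn (fun u : ℝ => g ((u : ℂ) * E4)) (Set.Ioi 0) := h2
  have aux : ∀ η : ℝ, 0 < η → ∫ u in Set.Ioi (0 : ℝ), Gf η g (u:ℂ)
      = E4 * ∫ u in Set.Ioi (0 : ℝ), Gf η g ((u : ℂ) * E4) :=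
    fun η hη => fresnel_aux g hg γ c hγ hc C k q hqk hbound h1 h2' η hη
  rw [show Complex.exp (Complex.I * (Real.pi:ℂ) / 4) = E4 from rfl]
  have hηpos : ∀ n : ℕ, (0:ℝ) < 1/((n:ℝ)+1) := fun n => by positivity
  have hGc : ∀ n : ℕ, Continuous (Gf (1/((n:ℝ)+1)) g) := fun n => by
    unfold Gf; have := hg.continuous; fun_prop
  have D1 : Tendsto (fun n : ℕ => ∫ u in Set.Ioi (0:ℝ), Gf (1/((n:ℝ)+1)) g (u:ℂ)) atTop
      (𝓝 (∫ u in Set.Ioi (0:ℝ), g (u:ℂ))) := by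
    apply MeasureTheory.tendsto_integral_of_dominated_convergence (fun u : ℝ => ‖g (u:ℂ)‖)
    · exact fun n => ((hGc n).comp Complex.continuous_ofReal).aestronglyMeasurable
    · exact h1.norm
    · exact fun n => Filter.Eventually.of_forall fun u => Gf_norm_real _ (hηpos n).le g u
    · exact Filter.Eventually.of_forall fun u => Gf_tendsto g _
  have D2 : Tendsto (fun n : ℕ => ∫ u in Set.Ioi (0:ℝ), Gf (1/((n:ℝ)+1)) g ((u:ℂ)*E4)) atTop
      (𝓝 (∫ u in Set.Ioi (0:ℝ), g ((u:ℂ)*E4))) := by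
    apply MeasureTheory.tendsto_integral_of_dominated_convergence (fun u : ℝ => ‖g ((u:ℂ)*E4)‖)
    · intro n
      apply Continuous.aestronglyMeasurable
      exact (hGc n).comp (Complex.continuous_ofReal.mul continuous_const)
    · exact h2.norm
    · exact fun n => Filter.Eventually.of_forall fun u => le_of_eq (Gf_norm_ray _ g u)
    · exact Filter.Eventually.of_forall fun u => Gf_tendsto g _
  have heq : (fun n : ℕ => ∫ u in Set.Ioi (0:ℝ), Gf (1/((n:ℝ)+1)) g (u:ℂ))
      = fun n : ℕ => E4 * ∫ u in Set.Ioi (0:ℝ), Gf (1/((n:ℝ)+1)) g ((u:ℂ)*E4) :=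
    funext fun n => aux _ (hηpos n)
  rw [heq] at D1
  exact tendsto_nhds_unique D1 (D2.const_mul E4)
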